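/- Let P = {p_i : i ≥ 1} and Q = {q_k : k ≥ 1} be probability distributions on a countably infinite alphabet with all probabilities positive and Q non-increasing, such that p_k = c_1 k^{r} e^{−λ k} and q_k = c_2 e^{−(λ/2) k} for all k ≥ k_0, where k_0 ≥ 1 is an integer and λ > 0, r > 0, c_1 > 0, c_2 > 0 are constants. Then Q dominates P; moreover, for all sufficiently large k each interval (q_{k+1}, q_k] contains at most one term p_j. -/
import Mathlib


open Filter Topology

/-- A non-increasing distribution `Q` dominates `P` if there is a finite positive integer
`M` such that `#{i : q_{k+1} < p_i ≤ q_k} ≤ M` for every `k`. -/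
def Dominates (q p : ℕ → ℝ) : Prop :=
  ∃ M : ℕ, 0 < M ∧ ∀ k : ℕ, {i : ℕ | q (k + 1) < p i ∧ p i ≤ q k}.encard ≤ (M : ℕ∞)

/-- If `p_k = c₁ k^r e^(−λk)` and `q_k = c₂ e^(−(λ/2)k)` for all `k ≥ k₀`, with `λ, r > 0`,
then `Q` dominates `P`; moreover, for all sufficiently large `k`, each interval
`(q_{k+1}, q_k]` contains at most one term `p_j`. -/
theorem stmt16 (p q : ℕ → ℝ) (hp : ∀ i, 0 < p i) (hq : ∀ k, 0 < q k)
    (hpsum : ∑' i, p i = 1) (hqsum : ∑' k, q k = 1) (hqmono : Antitone q)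
    (c₁ c₂ lam r : ℝ) (hc₁ : 0 < c₁) (hc₂ : 0 < c₂) (hlam : 0 < lam) (hr : 0 < r)
    (k₀ : ℕ) (hk₀ : 1 ≤ k₀)
    (hpform : ∀ k : ℕ, k₀ ≤ k → p k = c₁ * (k : ℝ) ^ r * Real.exp (-lam * (k : ℝ)))
    (hqform : ∀ k : ℕ, k₀ ≤ k → q k = c₂ * Real.exp (-(lam / 2) * (k : ℝ))) :
    Dominates q p ∧
      ∀ᶠ k : ℕ in atTop, {j : ℕ | q (k + 1) < p j ∧ p j ≤ q k}.encard ≤ 1 := by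
  -- summability and decay of p, q
  have hpsm : Summable p := by
    by_contra h
    rw [tsum_eq_zero_of_not_summable h] at hpsum; norm_num at hpsum
  have hqsm : Summable q := by
    by_contra h
    rw [tsum_eq_zero_of_not_summable h] at hqsum; norm_num at hqsum
  have hpt : Tendsto p atTop (𝓝 0) := hpsm.tendsto_atTop_zero
  have hqt : Tendsto q atTop (𝓝 0) := hqsm.tendsto_atTop_zero
  have hfin : ∀ ε : ℝ, 0 < ε → {j : ℕ | ε < p j}.Finite := by
    intro ε hε
    have h1 : ∀ᶠ j in cofinite, p j < ε := by
      rw [Nat.cofinite_eq_atTop]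
      exact hpt.eventually (gt_mem_nhds hε)
    exact (Filter.eventually_cofinite.mp h1).subset fun j hj => not_lt.mpr (le_of_lt hj)
  -- q ratio
  have hqratio : ∀ k : ℕ, k₀ ≤ k → q k = Real.exp (lam / 2) * q (k + 1) := by
    intro k hk
    rw [hqform k hk, hqform (k + 1) (hk.trans (Nat.le_succ k)), mul_left_comm,
      ← Real.exp_add]
    congr 2
    push_cast; ring
  have hexp1 : (1 : ℝ) < Real.exp (lam / 2) := Real.one_lt_exp_iff.mpr (by linarith)
  -- choose N with ratio control
  have htend : Tendsto (fun j : ℕ => (((j : ℝ) + 1) / (j : ℝ)) ^ r) atTop (𝓝 1) := by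
    have h1 : Tendsto (fun j : ℕ => ((j : ℝ) + 1) / (j : ℝ)) atTop (𝓝 1) := by
      have h2 : Tendsto (fun j : ℕ => 1 + 1 / (j : ℝ)) atTop (𝓝 (1 + 0)) :=
        tendsto_const_nhds.add tendsto_one_div_atTop_nhds_zero_nat
      rw [add_zero] at h2
      refine h2.congr' ?_
      filter_upwards [eventually_ge_atTop 1] with j hj
      have : (j : ℝ) ≠ 0 := by positivity
      field_simp
    have := h1.rpow_const (Or.inr hr.le)
    rwa [Real.one_rpow] at this
  obtain ⟨N0, hN0⟩ := eventually_atTop.mp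
    ((htend.eventually (Iio_mem_nhds hexp1)).mono fun j hj => le_of_lt hj)
  set N : ℕ := max N0 (max k₀ 1) with hN
  have hNk₀ : k₀ ≤ N := le_trans (le_max_left _ _) (le_max_right _ _)
  have hN1 : 1 ≤ N := le_trans (le_max_right _ _) (le_max_right _ _)
  -- key ratio inequality for p
  have hkey : ∀ j : ℕ, N ≤ j → Real.exp (lam / 2) * p (j + 1) ≤ p j := by
    intro j hj
    have hjk₀ : k₀ ≤ j := hNk₀.trans hj
    have hj1 : 1 ≤ j := hN1.trans hj
    have hjpos : (0 : ℝ) < (j : ℝ) := by exact_mod_cast hj1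
    have hratio : (((j : ℝ) + 1) / (j : ℝ)) ^ r ≤ Real.exp (lam / 2) :=
      hN0 j (le_trans (le_max_left _ _) hj)
    have h2 : ((j : ℝ) + 1) ^ r ≤ Real.exp (lam / 2) * (j : ℝ) ^ r := by
      have h3 := mul_le_mul_of_nonneg_right hratio (Real.rpow_nonneg hjpos.le r)
      rwa [← Real.mul_rpow (by positivity) hjpos.le, div_mul_cancel₀ _ hjpos.ne'] at h3
    have key2 : ((j : ℝ) + 1) ^ r * Real.exp (-(lam / 2)) ≤ (j : ℝ) ^ r := by
      have e1 : Real.exp (lam / 2) * Real.exp (-(lam / 2)) = 1 := by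
        rw [← Real.exp_add]; simp
      calc ((j : ℝ) + 1) ^ r * Real.exp (-(lam / 2))
          ≤ Real.exp (lam / 2) * (j : ℝ) ^ r * Real.exp (-(lam / 2)) :=
            mul_le_mul_of_nonneg_right h2 (Real.exp_pos _).le
        _ = (j : ℝ) ^ r := by linear_combination ((j : ℝ) ^ r) * e1
    rw [hpform j hjk₀, hpform (j + 1) (hjk₀.trans (Nat.le_succ j))]
    push_cast
    have hE : Real.exp (lam / 2) * Real.exp (-lam * ((j : ℝ) + 1)) =
        Real.exp (-(lam / 2)) * Real.exp (-lam * (j : ℝ)) := by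
      rw [← Real.exp_add, ← Real.exp_add]; congr 1; ring
    calc Real.exp (lam / 2) * (c₁ * ((j : ℝ) + 1) ^ r * Real.exp (-lam * ((j : ℝ) + 1)))
        = c₁ * (((j : ℝ) + 1) ^ r * Real.exp (-(lam / 2))) * Real.exp (-lam * (j : ℝ)) := by
          linear_combination (c₁ * ((j : ℝ) + 1) ^ r) * hE
      _ ≤ c₁ * (j : ℝ) ^ r * Real.exp (-lam * (j : ℝ)) := by
          gcongr
  -- p is decreasing from N on
  have hmono : ∀ m n : ℕ, N ≤ m → m ≤ n → p n ≤ p m := by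
    intro m n hm hmn
    induction n, hmn using Nat.le_induction with
    | base => exact le_refl _
    | succ n hn ih =>
        refine le_trans ?_ ih
        have h1 := hkey n (hm.trans hn)
        nlinarith [hp (n + 1)]
  -- threshold K
  have hNne : (Finset.range N).Nonempty := ⟨0, Finset.mem_range.mpr hN1⟩
  set ε₀ : ℝ := (Finset.range N).inf' hNne p with hε₀
  have hε₀pos : 0 < ε₀ := (Finset.lt_inf'_iff _).mpr fun j _ => hp j
  obtain ⟨K0, hK0⟩ := eventually_atTop.mp (hqt.eventually (gt_mem_nhds hε₀pos))
  set K : ℕ := max K0 k₀ with hK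
  -- for k ≥ K, at most one element
  have hone : ∀ k : ℕ, K ≤ k → {j : ℕ | q (k + 1) < p j ∧ p j ≤ q k}.encard ≤ 1 := by
    intro k hk
    have hkk₀ : k₀ ≤ k := le_trans (le_max_right _ _) hk
    have hqk : q k < ε₀ := hK0 k (le_trans (le_max_left _ _) hk)
    have hge : ∀ j, q (k + 1) < p j ∧ p j ≤ q k → N ≤ j := by
      rintro j ⟨_, hj2⟩
      by_contra h
      push_neg at h
      have : ε₀ ≤ p j := Finset.inf'_le _ (Finset.mem_range.mpr h)
      linarith
    have main : ∀ a b : ℕ, (q (k + 1) < p a ∧ p a ≤ q k) →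
        (q (k + 1) < p b ∧ p b ≤ q k) → a < b → False := by
      rintro a b ⟨ha1, ha2⟩ ⟨hb1, hb2⟩ hab
      have hNa := hge a ⟨ha1, ha2⟩
      have h1 : p b ≤ p (a + 1) := hmono (a + 1) b (by omega) (by omega)
      have h2 := hkey a hNa
      have h3 := hqratio k hkk₀
      have h4 : Real.exp (lam / 2) * p b ≤ Real.exp (lam / 2) * p (a + 1) :=
        mul_le_mul_of_nonneg_left h1 (Real.exp_pos _).le
      have h5 : Real.exp (lam / 2) * q (k + 1) < Real.exp (lam / 2) * p b :=
        mul_lt_mul_of_pos_left hb1 (Real.exp_pos _)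
      linarith
    rw [Set.encard_le_one_iff]
    intro a b ha hb
    rcases lt_trichotomy a b with h | h | h
    · exact absurd (main a b ha hb h) not_false
    · exact h
    · exact absurd (main b a hb ha h) not_false
  constructor
  · -- Dominates
    have Tfin : {j : ℕ | q K < p j}.Finite := hfin (q K) (hq K)
    refine ⟨Tfin.toFinset.card + 1, Nat.succ_pos _, fun k => ?_⟩
    rcases le_or_gt K k with hk | hk
    · refine le_trans (hone k hk) ?_
      exact_mod_cast Nat.one_le_iff_ne_zero.mpr (Nat.succ_ne_zero _)
    · have hsub : {j : ℕ | q (k + 1) < p j ∧ p j ≤ q k} ⊆ {j : ℕ | q K < p j} := by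
        rintro j ⟨hj1, _⟩
        exact lt_of_le_of_lt (hqmono (by omega : k + 1 ≤ K)) hj1
      calc {j : ℕ | q (k + 1) < p j ∧ p j ≤ q k}.encard
          ≤ {j : ℕ | q K < p j}.encard := Set.encard_mono hsub
        _ = (Tfin.toFinset.card : ℕ∞) := by
            rw [Set.Finite.encard_eq_coe_toFinset_card]
        _ ≤ ((Tfin.toFinset.card + 1 : ℕ) : ℕ∞) := by exact_mod_cast Nat.le_succ _
  · exact eventually_atTop.mpr ⟨K, hone⟩
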